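/- Let ℰ = (E₁, E₂, E₍?₎) be an optimal and proper USD measurement for (γ₁, γ₂), and let Π be an orthogonal projector with range contained in ker γ₁ ∩ supp(γ₁ + γ₂). Then E₁Π = 0 if and only if E₂Π = Π. -/

import Mathlib

open Matrix ComplexOrder

section Aux

variable {n : ℕ}

noncomputable def Matrix.PosSemidef.sqrt {A : Matrix (Fin n) (Fin n) ℂ} (_hA : A.PosSemidef) :
    Matrix (Fin n) (Fin n) ℂ :=
  open scoped MatrixOrder in CFC.sqrt A

lemma Matrix.PosSemidef.posSemidef_sqrt {A : Matrix (Fin n) (Fin n) ℂ} (hA : A.PosSemidef) :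
    hA.sqrt.PosSemidef := by
  open scoped MatrixOrder in exact (CFC.sqrt_nonneg A).posSemidef

lemma Matrix.PosSemidef.sqrt_mul_self {A : Matrix (Fin n) (Fin n) ℂ} (hA : A.PosSemidef) :
    hA.sqrt * hA.sqrt = A := by
  open scoped MatrixOrder in exact CFC.sqrt_mul_sqrt_self A hA.nonneg

private lemma quad_single (A : Matrix (Fin n) (Fin n) ℂ) (i : Fin n) :
    star (Pi.single i (1:ℂ)) ⬝ᵥ A *ᵥ Pi.single i 1 = A i i := by
  have hs : star (Pi.single i (1:ℂ) : Fin n → ℂ) = (Pi.single i (1:ℂ) : Fin n → ℂ) := by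
    ext k; simp [Pi.single_apply, apply_ite star]
  rw [hs]
  simp [Matrix.mulVec_single, single_dotProduct]

private lemma trace_hermitian_sq_zero {X : Matrix (Fin n) (Fin n) ℂ}
    (h : Matrix.trace (Xᴴ * X) = 0) : X = 0 := by
  have h' : ∑ j, star (fun i => X i j) ⬝ᵥ (fun i => X i j) = 0 := by
    rw [← h]
    simp [Matrix.trace, Matrix.diag, Matrix.mul_apply, dotProduct,
      Matrix.conjTranspose_apply]
  have hnn : ∀ j ∈ Finset.univ, (0:ℂ) ≤ star (fun i => X i j) ⬝ᵥ (fun i => X i j) :=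
    fun j _ => dotProduct_star_self_nonneg _
  have hz := (Finset.sum_eq_zero_iff_of_nonneg hnn).mp h'
  ext i j
  have hj := (dotProduct_star_self_eq_zero).mp (hz j (Finset.mem_univ j))
  simpa using congrFun hj i

private lemma psd_trace_zero {A : Matrix (Fin n) (Fin n) ℂ} (hA : A.PosSemidef)
    (h : A.trace = 0) : A = 0 := by
  have h1 : (hA.sqrt)ᴴ * hA.sqrt = A := by
    rw [hA.posSemidef_sqrt.1, hA.sqrt_mul_self]
  have h2 : hA.sqrt = 0 := trace_hermitian_sq_zero (by rw [h1, h])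
  rw [← hA.sqrt_mul_self, h2, mul_zero]

private lemma psd_trace_nonneg {A : Matrix (Fin n) (Fin n) ℂ} (hA : A.PosSemidef) :
    0 ≤ A.trace :=
  Finset.sum_nonneg fun i _ => by
    have := hA.dotProduct_mulVec_nonneg (Pi.single i 1)
    rwa [quad_single] at this

private lemma psd_quadratic_zero {A : Matrix (Fin n) (Fin n) ℂ} (hA : A.PosSemidef)
    (h : ∀ x : Fin n → ℂ, star x ⬝ᵥ A *ᵥ x = 0) : A = 0 :=
  psd_trace_zero hA (Finset.sum_eq_zero fun i _ => by
    have := h (Pi.single i 1)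
    rwa [quad_single] at this)

private lemma psd_sandwich_zero {A B : Matrix (Fin n) (Fin n) ℂ} (hA : A.PosSemidef)
    (h : Bᴴ * A * B = 0) : A * B = 0 := by
  have h1 : (hA.sqrt * B)ᴴ * (hA.sqrt * B) = Bᴴ * A * B := by
    rw [conjTranspose_mul, hA.posSemidef_sqrt.1, mul_assoc,
      ← mul_assoc hA.sqrt, hA.sqrt_mul_self, ← mul_assoc]
  have h2 : hA.sqrt * B = 0 := conjTranspose_mul_self_eq_zero.mp (h1.trans h)
  calc A * B = hA.sqrt * (hA.sqrt * B) := by rw [← mul_assoc, hA.sqrt_mul_self]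
  _ = 0 := by rw [h2, mul_zero]

private lemma psd_mul_psd_of_trace_zero {A B : Matrix (Fin n) (Fin n) ℂ}
    (hA : A.PosSemidef) (hB : B.PosSemidef) (h : (A * B).trace = 0) : A * B = 0 := by
  set a := hA.sqrt with ha
  set b := hB.sqrt with hb
  have key : (a * b)ᴴ * (a * b) = b * (A * b) := by
    rw [conjTranspose_mul, hA.posSemidef_sqrt.1, hB.posSemidef_sqrt.1,
      mul_assoc, ← mul_assoc a a b, hA.sqrt_mul_self]
  have htr : Matrix.trace ((a * b)ᴴ * (a * b)) = 0 := by
    rw [key, Matrix.trace_mul_comm, mul_assoc, hB.sqrt_mul_self]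
    exact h
  have hab : a * b = 0 := trace_hermitian_sq_zero htr
  calc A * B = a * a * (b * b) := by rw [hA.sqrt_mul_self, hB.sqrt_mul_self]
  _ = a * (a * b) * b := by noncomm_ring
  _ = 0 := by rw [hab, mul_zero, zero_mul]

private lemma mul_eq_zero_of_range_le_ker {A B : Matrix (Fin n) (Fin n) ℂ}
    (h : LinearMap.range (Matrix.toEuclideanLin B) ≤ LinearMap.ker (Matrix.toEuclideanLin A)) :
    A * B = 0 := by
  have h0 : Matrix.toEuclideanLin (A * B) = 0 := by
    apply LinearMap.ext
    intro x
    have hx : Matrix.toEuclideanLin A (Matrix.toEuclideanLin B x) = 0 :=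
      LinearMap.mem_ker.mp (h ⟨x, rfl⟩)
    simp only [LinearMap.zero_apply]
    rw [← hx]
    simp [Matrix.toEuclideanLin_apply, Matrix.mulVec_mulVec]
  exact (LinearEquiv.map_eq_zero_iff _).mp h0

private lemma exists_mulVec_eq {A B : Matrix (Fin n) (Fin n) ℂ}
    (h : LinearMap.range (Matrix.toEuclideanLin B) ≤ LinearMap.range (Matrix.toEuclideanLin A))
    (x : Fin n → ℂ) : ∃ u : Fin n → ℂ, A *ᵥ u = B *ᵥ x := by
  have hmem : Matrix.toEuclideanLin B ((WithLp.equiv 2 (Fin n → ℂ)).symm x)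
      ∈ LinearMap.range (Matrix.toEuclideanLin A) := h (LinearMap.mem_range_self _ _)
  obtain ⟨u, hu⟩ := hmem
  refine ⟨(WithLp.equiv 2 (Fin n → ℂ)) u, ?_⟩
  have := congrArg (WithLp.equiv 2 (Fin n → ℂ)) hu
  simpa [Matrix.toEuclideanLin_apply] using this

private lemma mul_vecMulVec (M : Matrix (Fin n) (Fin n) ℂ) (a b : Fin n → ℂ) :
    M * vecMulVec a b = vecMulVec (M *ᵥ a) b := by
  ext i j
  simp [Matrix.mul_apply, vecMulVec_apply, Matrix.mulVec, dotProduct,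
    Finset.sum_mul, mul_assoc]

private lemma vecMulVec_mul (M : Matrix (Fin n) (Fin n) ℂ) (a b : Fin n → ℂ) :
    vecMulVec a b * M = vecMulVec a (b ᵥ* M) := by
  ext i j
  simp only [Matrix.mul_apply, vecMulVec_apply, Matrix.vecMul, dotProduct,
    Finset.mul_sum]
  exact Finset.sum_congr rfl fun k _ => by ring

private lemma vecMulVec_mul_vecMulVec (a b c d : Fin n → ℂ) :
    vecMulVec a b * vecMulVec c d = (b ⬝ᵥ c) • vecMulVec a d := by
  ext i j
  simp only [Matrix.mul_apply, vecMulVec_apply, Matrix.smul_apply, dotProduct,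
    Finset.sum_mul, smul_eq_mul, Finset.mul_sum]
  exact Finset.sum_congr rfl fun k _ => by ring

private lemma trace_vecMulVec (a b : Fin n → ℂ) :
    Matrix.trace (vecMulVec a b) = b ⬝ᵥ a := by
  simp [Matrix.trace, Matrix.diag, vecMulVec_apply, dotProduct, mul_comm]

private lemma conjTranspose_vecMulVec_star (a : Fin n → ℂ) :
    (vecMulVec a (star a))ᴴ = vecMulVec a (star a) := by
  ext i j
  simp [vecMulVec_apply, Matrix.conjTranspose_apply, mul_comm]

end Aux

section Improve

variable {n : ℕ}

private lemma improvement {γ₁ γ₂ Eq : Matrix (Fin n) (Fin n) ℂ}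
    (hγ₂ : γ₂.PosSemidef) (hEq : Eq.PosSemidef) (p : Fin n → ℂ)
    (hγ₁z : γ₁ *ᵥ (Eq *ᵥ p) = 0) (hγ₂z : γ₂ *ᵥ (Eq *ᵥ p) ≠ 0) :
    ∃ S : Matrix (Fin n) (Fin n) ℂ, S.PosSemidef ∧ (Eq - S).PosSemidef ∧
      Matrix.trace (S * γ₁) = 0 ∧ 0 < (Matrix.trace (S * γ₂)).re := by
  have hε0 : (0:ℂ) ≤ star p ⬝ᵥ Eq *ᵥ p := hEq.dotProduct_mulVec_nonneg p
  set ε : ℂ := star p ⬝ᵥ Eq *ᵥ p with hεdef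
  have hεne : ε ≠ 0 := by
    intro h0
    exact hγ₂z (by rw [(hEq.dotProduct_mulVec_zero_iff p).mp h0, Matrix.mulVec_zero])
  have him : ε.im = 0 := ((Complex.nonneg_iff).mp hε0).2.symm
  have hre : 0 < ε.re := by
    rcases ((Complex.nonneg_iff).mp hε0).1.lt_or_eq with h | h
    · exact h
    · exact absurd (Complex.ext (by simp [← h]) (by simp [him])) hεne
  have hstar : star ε = ε := by
    rw [Complex.star_def]
    exact Complex.conj_eq_iff_im.mpr him
  set R := hEq.sqrt with hRdef
  have hRH : Rᴴ = R := hEq.posSemidef_sqrt.1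
  have hRR : R * R = Eq := hEq.sqrt_mul_self
  set w : Fin n → ℂ := R *ᵥ p with hw
  set z : Fin n → ℂ := Eq *ᵥ p with hz
  have hzw : z = R *ᵥ w := by rw [hz, hw, Matrix.mulVec_mulVec, hRR]
  have hww : star w ⬝ᵥ w = ε := by
    rw [hw, Matrix.star_mulVec, hRH, Matrix.dotProduct_mulVec, Matrix.vecMul_vecMul,
      hRR, ← Matrix.dotProduct_mulVec]
  set Pp : Matrix (Fin n) (Fin n) ℂ := ε⁻¹ • vecMulVec w (star w) with hPp
  have hPpH : Ppᴴ = Pp := by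
    rw [hPp, Matrix.conjTranspose_smul, conjTranspose_vecMulVec_star]
    congr 1
    rw [star_inv₀, hstar]
  have hPpPp : Pp * Pp = Pp := by
    rw [hPp, Matrix.smul_mul, Matrix.mul_smul, vecMulVec_mul_vecMulVec, hww,
      smul_smul, smul_smul]
    congr 1
    field_simp
  have hPpPSD : Pp.PosSemidef := by
    have := Matrix.posSemidef_conjTranspose_mul_self Pp
    rwa [hPpH, hPpPp] at this
  have hDH : (1 - Pp)ᴴ = 1 - Pp := by
    rw [Matrix.conjTranspose_sub, Matrix.conjTranspose_one, hPpH]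
  have hDD : (1 - Pp) * (1 - Pp) = 1 - Pp := by
    calc (1 - Pp) * (1 - Pp) = 1 - Pp - Pp + Pp * Pp := by noncomm_ring
    _ = 1 - Pp := by rw [hPpPp]; abel
  have hDPSD : (1 - Pp).PosSemidef := by
    have := Matrix.posSemidef_conjTranspose_mul_self (1 - Pp)
    rwa [hDH, hDD] at this
  have hSz : R * Pp * R = ε⁻¹ • vecMulVec z (star z) := by
    rw [hPp, Matrix.mul_smul, Matrix.smul_mul, mul_vecMulVec, vecMulVec_mul, hzw]
    simp [Matrix.star_mulVec, hRH, hw]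
  have hSpsd : (R * Pp * R).PosSemidef := by
    have := hPpPSD.conjTranspose_mul_mul_same R
    rwa [hRH] at this
  have hFqpsd : (Eq - R * Pp * R).PosSemidef := by
    have hdiff : Eq - R * Pp * R = R * (1 - Pp) * R := by
      rw [Matrix.mul_sub, Matrix.mul_one, Matrix.sub_mul, hRR]
    rw [hdiff]
    have := hDPSD.conjTranspose_mul_mul_same R
    rwa [hRH] at this
  have htr : ∀ M : Matrix (Fin n) (Fin n) ℂ,
      Matrix.trace ((R * Pp * R) * M) = ε⁻¹ * (star z ⬝ᵥ M *ᵥ z) := by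
    intro M
    rw [hSz, Matrix.smul_mul, Matrix.trace_smul, vecMulVec_mul, trace_vecMulVec,
      ← Matrix.dotProduct_mulVec]
    simp [smul_eq_mul]
  have hδ0 : (0:ℂ) ≤ star z ⬝ᵥ γ₂ *ᵥ z := hγ₂.dotProduct_mulVec_nonneg z
  have hδne : star z ⬝ᵥ γ₂ *ᵥ z ≠ 0 := by
    intro h0
    exact hγ₂z ((hγ₂.dotProduct_mulVec_zero_iff z).mp h0)
  have hδim : (star z ⬝ᵥ γ₂ *ᵥ z).im = 0 := ((Complex.nonneg_iff).mp hδ0).2.symm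
  have hδre : 0 < (star z ⬝ᵥ γ₂ *ᵥ z).re := by
    rcases ((Complex.nonneg_iff).mp hδ0).1.lt_or_eq with h | h
    · exact h
    · exact absurd (Complex.ext (by simp [← h]) (by simp [hδim])) hδne
  refine ⟨R * Pp * R, hSpsd, hFqpsd, ?_, ?_⟩
  · rw [htr γ₁, hγ₁z, dotProduct_zero, mul_zero]
  · rw [htr γ₂]
    have hεr : ε = (ε.re : ℂ) := Complex.ext rfl (by simp [him])
    have hδr : (star z ⬝ᵥ γ₂ *ᵥ z) = ((star z ⬝ᵥ γ₂ *ᵥ z).re : ℂ) :=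
      Complex.ext rfl (by simp [hδim])
    rw [hεr, hδr, ← Complex.ofReal_inv, ← Complex.ofReal_mul, Complex.ofReal_re]
    positivity

end Improve

/-- For an optimal and proper USD measurement `(E₁, E₂, E?)` of `(γ₁, γ₂)` and an orthogonal
projector `Π` with range inside `ker γ₁ ∩ supp (γ₁+γ₂)`: `E₁ Π = 0 ↔ E₂ Π = Π`. -/
theorem stmt_11 {n : ℕ} (γ₁ γ₂ E₁ E₂ Eq P : Matrix (Fin n) (Fin n) ℂ)
    (hγ₁ : γ₁.PosSemidef) (hγ₂ : γ₂.PosSemidef)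
    (hE₁ : E₁.PosSemidef) (hE₂ : E₂.PosSemidef) (hEq : Eq.PosSemidef)
    (hsum : E₁ + E₂ + Eq = 1)
    (husd₁ : Matrix.trace (E₂ * γ₁) = 0) (husd₂ : Matrix.trace (E₁ * γ₂) = 0)
    (hproper : LinearMap.range (Matrix.toEuclideanLin (E₁ + E₂))
        ≤ LinearMap.range (Matrix.toEuclideanLin (γ₁ + γ₂)))
    (hopt : ∀ F₁ F₂ Fq : Matrix (Fin n) (Fin n) ℂ,
      F₁.PosSemidef → F₂.PosSemidef → Fq.PosSemidef → F₁ + F₂ + Fq = 1 →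
      Matrix.trace (F₂ * γ₁) = 0 → Matrix.trace (F₁ * γ₂) = 0 →
      (Matrix.trace (F₁ * γ₁) + Matrix.trace (F₂ * γ₂)).re
        ≤ (Matrix.trace (E₁ * γ₁) + Matrix.trace (E₂ * γ₂)).re)
    (hPh : Pᴴ = P) (hPi : P * P = P)
    (hPr : LinearMap.range (Matrix.toEuclideanLin P)
        ≤ LinearMap.ker (Matrix.toEuclideanLin γ₁)
          ⊓ LinearMap.range (Matrix.toEuclideanLin (γ₁ + γ₂))) :
    E₁ * P = 0 ↔ E₂ * P = P := by
  have hrange₁ : LinearMap.range (Matrix.toEuclideanLin P)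
      ≤ LinearMap.ker (Matrix.toEuclideanLin γ₁) := le_trans hPr inf_le_left
  have hrangeG : LinearMap.range (Matrix.toEuclideanLin P)
      ≤ LinearMap.range (Matrix.toEuclideanLin (γ₁ + γ₂)) := le_trans hPr inf_le_right
  have hγ₁P : γ₁ * P = 0 := mul_eq_zero_of_range_le_ker hrange₁
  have hE₂γ₁ : E₂ * γ₁ = 0 := psd_mul_psd_of_trace_zero hE₂ hγ₁ husd₁
  have hγ₁E₂ : γ₁ * E₂ = 0 := by
    have := congrArg Matrix.conjTranspose hE₂γ₁
    simpa [Matrix.conjTranspose_mul, hγ₁.1.eq, hE₂.1.eq] using this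
  constructor
  · intro hE₁P
    have hγ₁EqP : γ₁ * (Eq * P) = 0 := by
      have hEq_eq : Eq = 1 - E₁ - E₂ := by rw [← hsum]; abel
      calc γ₁ * (Eq * P) = γ₁ * P - γ₁ * (E₁ * P) - γ₁ * E₂ * P := by
            rw [hEq_eq]; noncomm_ring
      _ = 0 := by rw [hγ₁P, hE₁P, hγ₁E₂, mul_zero, zero_mul, sub_zero, sub_zero]
    by_cases hz : γ₂ * (Eq * P) = 0
    · have hGEqP : (γ₁ + γ₂) * (Eq * P) = 0 := by rw [add_mul, hγ₁EqP, hz, add_zero]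
      have hGH : (γ₁ + γ₂)ᴴ = γ₁ + γ₂ := by
        rw [Matrix.conjTranspose_add, hγ₁.1.eq, hγ₂.1.eq]
      have hquad : ∀ x : Fin n → ℂ, star x ⬝ᵥ (Pᴴ * Eq * P) *ᵥ x = 0 := by
        intro x
        obtain ⟨u, hu⟩ := exists_mulVec_eq hrangeG x
        have e1 : (Pᴴ * Eq * P) *ᵥ x = Pᴴ *ᵥ ((Eq * P) *ᵥ x) := by
          rw [Matrix.mulVec_mulVec, Matrix.mul_assoc]
        rw [e1, Matrix.dotProduct_mulVec, ← Matrix.star_mulVec, ← hu,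
          Matrix.star_mulVec, hGH, ← Matrix.dotProduct_mulVec, Matrix.mulVec_mulVec,
          hGEqP, Matrix.zero_mulVec, dotProduct_zero]
      have hA0 : Pᴴ * Eq * P = 0 :=
        psd_quadratic_zero (hEq.conjTranspose_mul_mul_same P) hquad
      have hEqP : Eq * P = 0 := psd_sandwich_zero hEq hA0
      have hE₂eq : E₂ = 1 - E₁ - Eq := by rw [← hsum]; abel
      calc E₂ * P = P - E₁ * P - Eq * P := by rw [hE₂eq]; noncomm_ring
      _ = P := by rw [hE₁P, hEqP, sub_zero, sub_zero]
    · exfalso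
      obtain ⟨i₀, j₀, hij⟩ : ∃ i j, (γ₂ * (Eq * P)) i j ≠ 0 := by
        by_contra hc
        push_neg at hc
        exact hz (Matrix.ext fun i j => by simpa using hc i j)
      have hγ₁zz : γ₁ *ᵥ (Eq *ᵥ (P *ᵥ Pi.single j₀ 1)) = 0 := by
        rw [Matrix.mulVec_mulVec, Matrix.mulVec_mulVec, Matrix.mul_assoc, hγ₁EqP,
          Matrix.zero_mulVec]
      have hγ₂zz : γ₂ *ᵥ (Eq *ᵥ (P *ᵥ Pi.single j₀ 1)) ≠ 0 := by
        intro h0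
        apply hij
        have e : γ₂ *ᵥ (Eq *ᵥ (P *ᵥ Pi.single j₀ 1))
            = (γ₂ * (Eq * P)) *ᵥ Pi.single j₀ 1 := by
          rw [Matrix.mulVec_mulVec, Matrix.mulVec_mulVec, Matrix.mul_assoc]
        rw [e] at h0
        have h1 := congrFun h0 i₀
        simpa [Matrix.mulVec_single] using h1
      obtain ⟨S, hS, hFq, hSγ₁, hSγ₂⟩ :=
        improvement hγ₂ hEq (P *ᵥ Pi.single j₀ 1) hγ₁zz hγ₂zz
      have hkey := hopt E₁ (E₂ + S) (Eq - S) hE₁ (hE₂.add hS) hFq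
        (by rw [← hsum]; abel)
        (by rw [Matrix.add_mul, Matrix.trace_add, husd₁, hSγ₁, add_zero])
        husd₂
      rw [Matrix.add_mul, Matrix.trace_add] at hkey
      simp only [Complex.add_re] at hkey
      linarith [hSγ₂]
  · intro hE₂P
    have h1 : E₁ * P + Eq * P = 0 := by
      have hs : (E₁ + E₂ + Eq) * P = P := by rw [hsum, Matrix.one_mul]
      calc E₁ * P + Eq * P = (E₁ + E₂ + Eq) * P - E₂ * P := by noncomm_ring
      _ = 0 := by rw [hs, hE₂P, sub_self]
    have h2 : Pᴴ * E₁ * P + Pᴴ * Eq * P = 0 := by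
      calc Pᴴ * E₁ * P + Pᴴ * Eq * P = Pᴴ * (E₁ * P + Eq * P) := by noncomm_ring
      _ = 0 := by rw [h1, Matrix.mul_zero]
    have hA₁ := hE₁.conjTranspose_mul_mul_same P
    have hA₂ := hEq.conjTranspose_mul_mul_same P
    have htr : Matrix.trace (Pᴴ * E₁ * P) + Matrix.trace (Pᴴ * Eq * P) = 0 := by
      rw [← Matrix.trace_add, h2, Matrix.trace_zero]
    have ht1 : Matrix.trace (Pᴴ * E₁ * P) = 0 := by
      have g1 := psd_trace_nonneg hA₁
      have g2 := psd_trace_nonneg hA₂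
      have hle : Matrix.trace (Pᴴ * E₁ * P) ≤ 0 := by
        calc Matrix.trace (Pᴴ * E₁ * P) = -Matrix.trace (Pᴴ * Eq * P) :=
              eq_neg_of_add_eq_zero_left htr
        _ ≤ 0 := neg_nonpos.mpr g2
      exact le_antisymm hle g1
    have hA₁0 : Pᴴ * E₁ * P = 0 := psd_trace_zero hA₁ ht1
    exact psd_sandwich_zero hE₁ hA₁0
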